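/- Let m be a natural number, s_0,…,s_m ∈ ℂ support points, w_0,…,w_m ∈ ℂ barycentric weights, f_0,…,f_m ∈ ℂ support values, and μ a natural number with μ ≤ m. Let p = ∑_{k=0}^m w_k f_k · ∏_{j≠k} (X − s_j) ∈ ℂ[X]. If p is nonzero and has degree exactly m − μ, then ∑_{k=0}^m w_k f_k s_k^l = 0 for every natural number l < μ, and ∑_{k=0}^m w_k f_k s_k^μ ≠ 0. -/

import Mathlib

open Polynomial

/-- Numerator half of the converse direction of the paper's Theorem 3.2. -/
theorem numerator_degree_converse (m : ℕ) (s w f : ℕ → ℂ) (μ : ℕ) (hμ : μ ≤ m)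
    (p : Polynomial ℂ)
    (hp : p = ∑ k ∈ Finset.range (m + 1),
      C (w k * f k) * ∏ j ∈ (Finset.range (m + 1)).erase k, (X - C (s j)))
    (hp0 : p ≠ 0) (hdeg : p.natDegree = m - μ) :
    (∀ l < μ, ∑ k ∈ Finset.range (m + 1), w k * f k * s k ^ l = 0) ∧
      ∑ k ∈ Finset.range (m + 1), w k * f k * s k ^ μ ≠ 0 := by
  classical
  set N := Finset.range (m + 1) with hN
  set L : ℕ → Polynomial ℂ := fun k => ∏ j ∈ N.erase k, (X - C (s j)) with hLdef
  have hLmonic : ∀ k, (L k).Monic := fun k =>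
    monic_prod_of_monic _ _ fun j _ => monic_X_sub_C _
  have hLdeg : ∀ k ∈ N, (L k).natDegree = m := by
    intro k hk
    have h1 : (L k).natDegree = ∑ j ∈ N.erase k, (X - C (s j)).natDegree :=
      natDegree_prod _ _ (fun j _ => X_sub_C_ne_zero _)
    rw [h1]
    simp only [natDegree_X_sub_C, Finset.sum_const, smul_eq_mul, mul_one]
    rw [Finset.card_erase_of_mem hk, hN, Finset.card_range]; omega
  have hcoeff : ∀ (c : ℕ → ℂ), (∑ k ∈ N, C (c k) * L k).coeff m = ∑ k ∈ N, c k := by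
    intro c
    rw [Polynomial.finset_sum_coeff]
    refine Finset.sum_congr rfl ?_
    intro k hk
    rw [coeff_C_mul, ← hLdeg k hk, (hLmonic k).coeff_natDegree, mul_one]
  have key : ∀ l, l ≤ μ → (∀ i < l, ∑ k ∈ N, w k * f k * s k ^ i = 0) ∧
      X ^ l * p = ∑ k ∈ N, C (w k * f k * s k ^ l) * L k := by
    intro l hl
    induction l with
    | zero =>
      refine ⟨by omega, ?_⟩
      simpa using hp
    | succ l ih =>
      obtain ⟨hprev, heq⟩ := ih (le_of_lt hl)
      have hlμ : l < μ := hl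
      have hPl : ∑ k ∈ N, w k * f k * s k ^ l = p.coeff (m - l) := by
        have h2 := congrArg (fun q => Polynomial.coeff q m) heq
        rw [hcoeff (fun k => w k * f k * s k ^ l)] at h2
        rw [← h2]
        have hml : m - l + l = m := by omega
        conv_lhs => rw [← hml]
        rw [Polynomial.coeff_X_pow_mul]
      have hPl0 : ∑ k ∈ N, w k * f k * s k ^ l = 0 := by
        rw [hPl]
        apply coeff_eq_zero_of_natDegree_lt
        omega
      refine ⟨?_, ?_⟩
      · intro i hi
        rcases Nat.lt_succ_iff_lt_or_eq.mp hi with h | h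
        · exact hprev i h
        · rw [h]; exact hPl0
      · have hX : X ^ (l + 1) * p = X * (X ^ l * p) := by ring
        rw [hX, heq, Finset.mul_sum]
        have hsplit : ∀ k ∈ N, X * (C (w k * f k * s k ^ l) * L k)
            = C (w k * f k * s k ^ l) * ∏ j ∈ N, (X - C (s j))
              + C (w k * f k * s k ^ (l + 1)) * L k := by
          intro k hk
          have hm : (X - C (s k)) * L k = ∏ j ∈ N, (X - C (s j)) := by
            simp only [hLdef]; exact Finset.mul_prod_erase N (fun j => X - C (s j)) hk
          rw [← hm]
          have hC : C (w k * f k * s k ^ (l + 1))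
              = C (w k * f k * s k ^ l) * C (s k) := by
            rw [← C_mul]; ring_nf
          rw [hC]; ring
        rw [Finset.sum_congr rfl hsplit, Finset.sum_add_distrib, ← Finset.sum_mul,
          ← map_sum C, hPl0, map_zero, zero_mul, zero_add]
  obtain ⟨hvan, heq⟩ := key μ le_rfl
  refine ⟨hvan, ?_⟩
  have hPμ : ∑ k ∈ N, w k * f k * s k ^ μ = p.coeff (m - μ) := by
    have h2 := congrArg (fun q => Polynomial.coeff q m) heq
    rw [hcoeff (fun k => w k * f k * s k ^ μ)] at h2
    rw [← h2]
    have hml : m - μ + μ = m := by omega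
    conv_lhs => rw [← hml]
    rw [Polynomial.coeff_X_pow_mul]
  rw [hPμ, ← hdeg]
  exact mt Polynomial.leadingCoeff_eq_zero.mp hp0
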